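/- Suppose the sequences κ, κ′, d : ℕ → (0,∞) satisfy the Antonets–Zhislin–Shereshevskij conditions. Let Z be a partition of {1,…,N} with 2 ≤ |Z|, and let C ⊆ {1,…,N} be a nonempty cluster which is not contained in any single cluster of Z. Then for every x ∈ M(Z,κ′,κ) one has |P₀[C]x|_m ≥ d(|Z|) · |P_c(Z)x|_m. -/

import Mathlib

/-! STATEMENT 14: on the region `M(Z,κ′,κ)`, a cluster `C` that is split by the partition `Z` satisfies `|P₀[C]x|_m ≥ d(|Z|)|P_c(Z)x|_m`. -/

open MeasureTheory Finset

open scoped RealInnerProductSpace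

noncomputable section

/-- The one-particle space `ℝⁿ`. -/
abbrev Pt (n : ℕ) := EuclideanSpace ℝ (Fin n)

/-- The configuration space `X = (ℝⁿ)^N`. -/
abbrev Conf (N n : ℕ) := Fin N → Pt n

/-- The mass inner product `⟨x,y⟩_m = ∑ i mᵢ ⟨xᵢ, yᵢ⟩`. -/
def minner {N n : ℕ} (mass : Fin N → ℝ) (x y : Conf N n) : ℝ :=
  ∑ i, mass i * ⟪x i, y i⟫

/-- The mass norm `|x|_m`. -/
def mnorm {N n : ℕ} (mass : Fin N → ℝ) (x : Conf N n) : ℝ :=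
  Real.sqrt (minner mass x x)

/-- The space `X₀` of relative positions: `∑ i mᵢ xᵢ = 0`. -/
def X0 {N n : ℕ} (mass : Fin N → ℝ) : Set (Conf N n) :=
  {x | ∑ i, mass i • x i = 0}

/-- Total mass `M[C]` of a cluster `C`. -/
def cmass {N : ℕ} (mass : Fin N → ℝ) (C : Finset (Fin N)) : ℝ := ∑ i ∈ C, mass i

/-- Center of mass `x_c[C]` of the cluster `C`. -/
def com {N n : ℕ} (mass : Fin N → ℝ) (C : Finset (Fin N)) (x : Conf N n) : Pt n :=
  (cmass mass C)⁻¹ • ∑ i ∈ C, mass i • x i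

/-- The `⟨·,·⟩_m`-orthogonal projection `P₀[C]` of `X₀` onto `X₀[C]`:
explicitly, `(P₀[C]x)ᵢ = xᵢ − x_c[C]` for `i ∈ C` and `0` otherwise. -/
def P0C {N n : ℕ} (mass : Fin N → ℝ) (C : Finset (Fin N)) (x : Conf N n) : Conf N n :=
  fun i => if i ∈ C then x i - com mass C x else 0

/-- A partition (cluster decomposition) of the `N`-particle system. -/
abbrev Partn (N : ℕ) := Finpartition (Finset.univ : Finset (Fin N))

/-- The `⟨·,·⟩_m`-orthogonal projection `P_c(Z)` of `X₀` onto `X_c(Z) = X₀ ⊖ X₀(Z)`: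
explicitly, `(P_c(Z)x)ᵢ = x_c[C]` where `C` is the cluster of `Z` containing `i`. -/
def PcZ {N n : ℕ} (mass : Fin N → ℝ) (Z : Partn N) (x : Conf N n) : Conf N n :=
  fun i => ∑ C ∈ Z.parts, if i ∈ C then com mass C x else 0

/-- The `⟨·,·⟩_m`-orthogonal projection `P₀(Z)` of `X₀` onto `X₀(Z) = ⊕_{C ∈ Z} X₀[C]`. -/
def P0Z {N n : ℕ} (mass : Fin N → ℝ) (Z : Partn N) (x : Conf N n) : Conf N n :=
  x - PcZ mass Z x

/-- The cone `K(Z,κ) = {x ∈ X₀ : |P₀(Z)x|_m ≤ κ|P_c(Z)x|_m}` for `|Z| > 1`;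
for the trivial partition (`|Z| = 1`), `K(Z,κ) = {x ∈ X₀ : |x|_m ≤ κ}`. -/
def cone {N n : ℕ} (mass : Fin N → ℝ) (Z : Partn N) (κ : ℝ) : Set (Conf N n) :=
  if 1 < Z.parts.card then
    {x ∈ X0 mass | mnorm mass (P0Z mass Z x) ≤ κ * mnorm mass (PcZ mass Z x)}
  else
    {x ∈ X0 mass | mnorm mass x ≤ κ}

/-- The total mass `M = ∑ i mᵢ`. -/
def totalMass {N : ℕ} (mass : Fin N → ℝ) : ℝ := ∑ i, mass i

/-- The minimal mass `m = minᵢ mᵢ`. -/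
def minMass {N : ℕ} (mass : Fin N → ℝ) : ℝ := ⨅ i, mass i

/-- The Antonets–Zhislin–Shereshevskij conditions on the sequences `κ, κ′, d : ℕ → (0,∞)`:
for every `l ≥ 1`, `0 < κ′(l) < κ(l)` and
`(m³/M³)·(κ′(l)² − κ(l+1)²)/(1 + κ′(l)²) − κ(l+1)² > d(l+1)² > κ(l+1)²(1 + κ(l+1)²)`. -/
def AZS {N : ℕ} (mass : Fin N → ℝ) (κ κ' dd : ℕ → ℝ) : Prop :=
  (∀ l, 0 < κ l ∧ 0 < κ' l ∧ 0 < dd l) ∧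
  ∀ l, 1 ≤ l →
    κ' l < κ l ∧
    (minMass mass ^ 3 / totalMass mass ^ 3) *
        ((κ' l ^ 2 - κ (l + 1) ^ 2) / (1 + κ' l ^ 2)) - κ (l + 1) ^ 2
      > dd (l + 1) ^ 2 ∧
    dd (l + 1) ^ 2 > κ (l + 1) ^ 2 * (1 + κ (l + 1) ^ 2)

/-- The region `M(Z,κ′,κ) = K(Z,κ(|Z|)) \ ⋃_{|Z′| < |Z|} K(Z′,κ′(|Z′|))`. -/
def Mreg {N n : ℕ} (mass : Fin N → ℝ) (κ' κ : ℕ → ℝ) (Z : Partn N) : Set (Conf N n) :=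
  cone mass Z (κ Z.parts.card) \
    ⋃ (Z' : Partn N) (_ : Z'.parts.card < Z.parts.card), cone mass Z' (κ' Z'.parts.card)

section AZSHelpers

variable {N n : ℕ}

lemma minner_self_eq_sum_sq (mass : Fin N → ℝ) (a : Conf N n) :
    minner mass a a = ∑ i, mass i * ‖a i‖ ^ 2 := by
  unfold minner
  exact Finset.sum_congr rfl fun i _ => by rw [real_inner_self_eq_norm_sq]

lemma minner_self_nonneg (mass : Fin N → ℝ) (hm : ∀ i, 0 ≤ mass i) (a : Conf N n) :
    0 ≤ minner mass a a := by
  rw [minner_self_eq_sum_sq]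
  exact Finset.sum_nonneg fun i _ => mul_nonneg (hm i) (sq_nonneg _)

lemma minner_comm' (mass : Fin N → ℝ) (a b : Conf N n) :
    minner mass a b = minner mass b a := by
  unfold minner
  exact Finset.sum_congr rfl fun i _ => by rw [real_inner_comm]

lemma mnorm_eq_sqrt (mass : Fin N → ℝ) (a : Conf N n) :
    mnorm mass a = Real.sqrt (minner mass a a) := rfl

lemma sq_le_of_mnorm_le (mass : Fin N → ℝ) (hm : ∀ i, 0 ≤ mass i) {a b : Conf N n} {c : ℝ}
    (hc : 0 ≤ c) (h : mnorm mass a ≤ c * mnorm mass b) :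
    minner mass a a ≤ c ^ 2 * minner mass b b := by
  have ha := minner_self_nonneg mass hm a
  have hb := minner_self_nonneg mass hm b
  have h2 := mul_le_mul h h (Real.sqrt_nonneg _)
    (mul_nonneg hc (by rw [mnorm_eq_sqrt]; exact Real.sqrt_nonneg _))
  rw [mnorm_eq_sqrt, mnorm_eq_sqrt, Real.mul_self_sqrt ha] at h2
  calc minner mass a a ≤ c * Real.sqrt (minner mass b b) * (c * Real.sqrt (minner mass b b)) := h2
    _ = c ^ 2 * (Real.sqrt (minner mass b b) * Real.sqrt (minner mass b b)) := by ring
    _ = c ^ 2 * minner mass b b := by rw [Real.mul_self_sqrt hb]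

lemma sq_lt_of_mnorm_lt (mass : Fin N → ℝ) (hm : ∀ i, 0 ≤ mass i) {a b : Conf N n} {c : ℝ}
    (hc : 0 ≤ c) (h : c * mnorm mass b < mnorm mass a) :
    c ^ 2 * minner mass b b < minner mass a a := by
  have ha := minner_self_nonneg mass hm a
  have hb := minner_self_nonneg mass hm b
  have h2 := mul_self_lt_mul_self
    (mul_nonneg hc (by rw [mnorm_eq_sqrt]; exact Real.sqrt_nonneg _)) h
  rw [mnorm_eq_sqrt, mnorm_eq_sqrt, Real.mul_self_sqrt ha] at h2
  calc c ^ 2 * minner mass b b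
      = c * Real.sqrt (minner mass b b) * (c * Real.sqrt (minner mass b b)) := by
        rw [show c * Real.sqrt (minner mass b b) * (c * Real.sqrt (minner mass b b))
            = c ^ 2 * (Real.sqrt (minner mass b b) * Real.sqrt (minner mass b b)) by ring,
          Real.mul_self_sqrt hb]
    _ < minner mass a a := h2

lemma minner_add_add (mass : Fin N → ℝ) (a b : Conf N n) :
    minner mass (a + b) (a + b) =
      minner mass a a + 2 * minner mass a b + minner mass b b := by
  simp only [minner, Pi.add_apply, real_inner_add_add_self, mul_add, Finset.sum_add_distrib]
  rw [Finset.mul_sum]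
  congr 1
  congr 1
  exact Finset.sum_congr rfl fun i _ => by ring

lemma minner_eq_sum_of_support (mass : Fin N → ℝ) (a b : Conf N n) (D : Finset (Fin N))
    (h : ∀ i ∉ D, a i = 0) :
    minner mass a b = ∑ i ∈ D, mass i * ⟪a i, b i⟫ :=
  (Finset.sum_subset (Finset.subset_univ D) (fun i _ hi => by simp [h i hi])).symm

lemma pair_le_minner_self (mass : Fin N → ℝ) (hm : ∀ i, 0 ≤ mass i) (a : Conf N n)
    {i j : Fin N} (hij : i ≠ j) :
    mass i * ‖a i‖ ^ 2 + mass j * ‖a j‖ ^ 2 ≤ minner mass a a := by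
  rw [minner_self_eq_sum_sq,
    ← Finset.sum_pair (f := fun k => mass k * ‖a k‖ ^ 2) hij]
  exact Finset.sum_le_sum_of_subset_of_nonneg (Finset.subset_univ _)
    (fun k _ _ => mul_nonneg (hm k) (sq_nonneg _))

lemma cmass_smul_com (mass : Fin N → ℝ) (hm : ∀ i, 0 < mass i) {B : Finset (Fin N)}
    (hB : B.Nonempty) (x : Conf N n) :
    cmass mass B • com mass B x = ∑ i ∈ B, mass i • x i := by
  have hpos : (0:ℝ) < cmass mass B := Finset.sum_pos (fun i _ => hm i) hB
  rw [com, smul_inv_smul₀ hpos.ne']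

lemma PcZ_eval (mass : Fin N → ℝ) (Z : Partn N) (x : Conf N n) {B : Finset (Fin N)}
    (hB : B ∈ Z.parts) {i : Fin N} (hi : i ∈ B) :
    PcZ mass Z x i = com mass B x := by
  unfold PcZ
  rw [Finset.sum_eq_single_of_mem B hB fun c hc hne =>
    if_neg fun hic => hne (Z.eq_of_mem_parts hc hB hic hi), if_pos hi]

lemma sum_mass_inner_left (mass : Fin N → ℝ) (B : Finset (Fin N)) (y : Conf N n) (c : Pt n) :
    ∑ i ∈ B, mass i * ⟪y i, c⟫ = ⟪∑ i ∈ B, mass i • y i, c⟫ := by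
  rw [sum_inner]
  exact Finset.sum_congr rfl fun i _ => (real_inner_smul_left _ _ _).symm

lemma sum_mass_inner_right (mass : Fin N → ℝ) (B : Finset (Fin N)) (y : Conf N n) (c : Pt n) :
    ∑ i ∈ B, mass i * ⟪c, y i⟫ = ⟪c, ∑ i ∈ B, mass i • y i⟫ := by
  rw [inner_sum]
  exact Finset.sum_congr rfl fun i _ => (real_inner_smul_right _ _ _).symm

end AZSHelpers

section AZSArith

private lemma aux_pair (m mi mj a b c S : ℝ) (hm : 0 ≤ m) (hmi : m ≤ mi) (hmj : m ≤ mj)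
    (ha : 0 ≤ a) (hb : 0 ≤ b) (hc : 0 ≤ c) (htri : c ≤ a + b)
    (hpair : mi * a ^ 2 + mj * b ^ 2 ≤ S) :
    m * c ^ 2 ≤ 2 * S := by
  have h1 : c ^ 2 ≤ (a + b) ^ 2 := by nlinarith
  have h2 : m * c ^ 2 ≤ m * (a + b) ^ 2 := mul_le_mul_of_nonneg_left h1 hm
  nlinarith [mul_nonneg (sub_nonneg.2 hmi) (sq_nonneg a),
    mul_nonneg (sub_nonneg.2 hmj) (sq_nonneg b), mul_nonneg hm (sq_nonneg (a - b))]

private lemma aux_cone (K K' s msqQ P0sq : ℝ) (hK' : 0 < K')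
    (hG1 : P0sq ≤ K ^ 2 * s)
    (hstrict : K' ^ 2 * (s - msqQ) < P0sq + msqQ) :
    (K' ^ 2 - K ^ 2) / (1 + K' ^ 2) * s ≤ msqQ := by
  rw [div_mul_eq_mul_div, div_le_iff₀ (by positivity)]
  nlinarith

private lemma aux_trivcone (K K' s : ℝ) (hK : 0 < K) (hs : 0 ≤ s) :
    (K' ^ 2 - K ^ 2) / (1 + K' ^ 2) * s ≤ s := by
  have h1 : (K' ^ 2 - K ^ 2) / (1 + K' ^ 2) ≤ 1 := by
    rw [div_le_one (by positivity)]
    nlinarith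
  nlinarith

private lemma aux_msqQbound (M M₁ M₂ dsq : ℝ) (h1 : 0 < M₁) (h2 : 0 < M₂)
    (hSM : M₁ + M₂ ≤ M) (hd : 0 ≤ dsq) :
    (M₁ * (M₂ / (M₁ + M₂)) ^ 2 + M₂ * (M₁ / (M₁ + M₂)) ^ 2) * dsq ≤ M * dsq := by
  have hS : 0 < M₁ + M₂ := by linarith
  have hco : M₁ * (M₂ / (M₁ + M₂)) ^ 2 + M₂ * (M₁ / (M₁ + M₂)) ^ 2 ≤ M := by
    rw [div_pow, div_pow,
      show M₁ * (M₂ ^ 2 / (M₁ + M₂) ^ 2) + M₂ * (M₁ ^ 2 / (M₁ + M₂) ^ 2)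
        = (M₁ * M₂ ^ 2 + M₂ * M₁ ^ 2) / (M₁ + M₂) ^ 2 by ring,
      div_le_iff₀ (by positivity)]
    nlinarith
  exact mul_le_mul_of_nonneg_right hco hd

set_option maxHeartbeats 1600000 in
private lemma aux_final (m M K K' Dd A s msqQ msqP0C u r W P0sq : ℝ)
    (hm : 0 < m) (hM : 0 < M) (h2m : 2 * m ≤ M) (hK : 0 < K) (hDd : 0 < Dd)
    (hA1 : m ^ 3 / M ^ 3 * A - K ^ 2 > Dd ^ 2)
    (hA2 : Dd ^ 2 > K ^ 2 * (1 + K ^ 2))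
    (hs0 : 0 ≤ s) (hu0 : 0 ≤ u) (hr0 : 0 ≤ r) (hW0 : 0 ≤ W)
    (hG1 : P0sq ≤ K ^ 2 * s) (hG2 : A * s ≤ msqQ) (hG3 : msqQ ≤ M * u ^ 2)
    (hr2 : m * r ^ 2 ≤ 2 * P0sq) (hW : u ≤ W + r) (hG4 : m * W ^ 2 ≤ 2 * msqP0C) :
    Dd ^ 2 * s ≤ msqP0C := by
  have hApos : 0 < A := by
    have h1 : 0 < m ^ 3 / M ^ 3 * A := by nlinarith [sq_nonneg K, pow_pos hDd 2]
    by_contra hA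
    push_neg at hA
    linarith [mul_nonpos_of_nonneg_of_nonpos
      (le_of_lt (div_pos (pow_pos hm 3) (pow_pos hM 3))) hA]
  set a' : ℝ := Real.sqrt (A / M * s) with ha'def
  set b' : ℝ := Real.sqrt (2 * K ^ 2 / m * s) with hb'def
  have ha'0 : 0 ≤ a' := Real.sqrt_nonneg _
  have hb'0 : 0 ≤ b' := Real.sqrt_nonneg _
  have ha'sq : a' ^ 2 = A / M * s := Real.sq_sqrt (by positivity)
  have hb'sq : b' ^ 2 = 2 * K ^ 2 / m * s := Real.sq_sqrt (by positivity)
  have hu_ge : a' ≤ u := by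
    have h1 : A / M * s ≤ u ^ 2 := by
      rw [div_mul_eq_mul_div, div_le_iff₀ hM]
      nlinarith [hG2, hG3]
    calc a' ≤ Real.sqrt (u ^ 2) := Real.sqrt_le_sqrt h1
      _ = u := Real.sqrt_sq hu0
  have hr_le : r ≤ b' := by
    have h1 : r ^ 2 ≤ 2 * K ^ 2 / m * s := by
      rw [div_mul_eq_mul_div, le_div_iff₀ hm]
      nlinarith [hr2, hG1]
    calc r = Real.sqrt (r ^ 2) := (Real.sqrt_sq hr0).symm
      _ ≤ b' := Real.sqrt_le_sqrt h1
  have hq3 : (Dd ^ 2 + K ^ 2) * M ^ 3 < m ^ 3 * A := by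
    have h1 : Dd ^ 2 + K ^ 2 < m ^ 3 / M ^ 3 * A := by linarith
    have h2 : (Dd ^ 2 + K ^ 2) * M ^ 3 < (m ^ 3 / M ^ 3 * A) * M ^ 3 :=
      mul_lt_mul_of_pos_right h1 (pow_pos hM 3)
    calc (Dd ^ 2 + K ^ 2) * M ^ 3 < (m ^ 3 / M ^ 3 * A) * M ^ 3 := h2
      _ = m ^ 3 * A := by field_simp
  have hDK : 2 * K ^ 2 ≤ Dd ^ 2 + K ^ 2 := by nlinarith [sq_nonneg (K * K), sq_nonneg K]
  have hq4 : 2 * K ^ 2 * M ^ 3 ≤ m ^ 3 * A := by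
    linarith [mul_le_mul_of_nonneg_right hDK (pow_pos hM 3).le]
  have hm2M2 : m ^ 2 ≤ M ^ 2 := by nlinarith
  have hco : 2 * K ^ 2 * M ≤ A * m := by
    have p1 : 2 * K ^ 2 * M * m ^ 2 ≤ 2 * K ^ 2 * M * M ^ 2 :=
      mul_le_mul_of_nonneg_left hm2M2 (by positivity)
    have p2 : (2 * K ^ 2 * M) * m ^ 2 ≤ (A * m) * m ^ 2 := by nlinarith [hq4]
    exact le_of_mul_le_mul_right p2 (pow_pos hm 2)
  have hba : b' ≤ a' := by
    apply Real.sqrt_le_sqrt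
    rw [div_mul_eq_mul_div, div_mul_eq_mul_div, div_le_div_iff₀ hm hM]
    nlinarith [mul_le_mul_of_nonneg_right hco hs0]

  have hab_le : a' - b' ≤ W := by linarith
  have hab_sq : (a' - b') ^ 2 ≤ W ^ 2 := by
    nlinarith [sub_nonneg.2 hba, hab_le, hW0]
  have hG4' : m * (a' - b') ^ 2 ≤ 2 * msqP0C := by
    linarith [mul_le_mul_of_nonneg_left hab_sq hm.le]
  have hAs : A * s = M * a' ^ 2 := by
    rw [ha'sq]
    field_simp
  have hKs : 2 * (K ^ 2 * s) = m * b' ^ 2 := by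
    rw [hb'sq]
    field_simp
  have h6 : (Dd ^ 2 + K ^ 2) * s * M ^ 2 ≤ m ^ 3 * a' ^ 2 := by
    have h5 : (Dd ^ 2 + K ^ 2) * (s * M ^ 2) ≤ m ^ 3 / M ^ 3 * A * (s * M ^ 2) := by
      apply mul_le_mul_of_nonneg_right _ (by positivity)
      linarith
    calc (Dd ^ 2 + K ^ 2) * s * M ^ 2 = (Dd ^ 2 + K ^ 2) * (s * M ^ 2) := by ring
      _ ≤ m ^ 3 / M ^ 3 * A * (s * M ^ 2) := h5
      _ = (m ^ 3 / M ^ 3) * (A * s) * M ^ 2 := by ring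
      _ = (m ^ 3 / M ^ 3) * (M * a' ^ 2) * M ^ 2 := by rw [hAs]
      _ = m ^ 3 * a' ^ 2 := by field_simp
  have h4m : 4 * m ^ 2 ≤ M ^ 2 := by nlinarith
  have h7 : 2 * m ^ 2 * a' ^ 2 ≤ M ^ 2 * ((a' - b') ^ 2 + b' ^ 2) := by
    linarith [mul_nonneg (mul_pos hm hm).le (sq_nonneg (a' - 2 * b')),
      mul_nonneg (by linarith : (0:ℝ) ≤ M ^ 2 - 4 * m ^ 2)
        (by positivity : (0:ℝ) ≤ (a' - b') ^ 2 + b' ^ 2)]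
  have h8 : Dd ^ 2 * s * M ^ 2 ≤ m / 2 * (a' - b') ^ 2 * M ^ 2 := by
    have e1 : K ^ 2 * s * M ^ 2 = m / 2 * b' ^ 2 * M ^ 2 := by
      linear_combination (M ^ 2 / 2) * hKs
    linarith [h6, e1, mul_le_mul_of_nonneg_left h7 (by positivity : (0:ℝ) ≤ m / 2)]
  have h9 : Dd ^ 2 * s ≤ m / 2 * (a' - b') ^ 2 :=
    le_of_mul_le_mul_right (by linarith [h8]) (pow_pos hM 2)
  linarith

end AZSArith

set_option maxHeartbeats 1600000 in
theorem stmt_14 (N n : ℕ) (hN : 2 ≤ N) (hn : 1 ≤ n)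
    (mass : Fin N → ℝ) (hm : ∀ i, 0 < mass i)
    (κ κ' dd : ℕ → ℝ) (hAZS : AZS mass κ κ' dd)
    (Z : Partn N) (hZ : 2 ≤ Z.parts.card)
    (C : Finset (Fin N)) (hC : C.Nonempty)
    (hsplit : ∀ C' ∈ Z.parts, ¬ C ⊆ C')
    (x : Conf N n) (hx : x ∈ Mreg mass κ' κ Z) :
    dd Z.parts.card * mnorm mass (PcZ mass Z x) ≤ mnorm mass (P0C mass C x) := by
  classical
  haveI : Nonempty (Fin N) := ⟨⟨0, by omega⟩⟩
  -- mass facts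
  obtain ⟨im, -, him⟩ := Finset.exists_min_image Finset.univ mass ⟨⟨0, by omega⟩, Finset.mem_univ _⟩
  have hmmin : minMass mass = mass im :=
    le_antisymm (ciInf_le (Finite.bddBelow_range mass) im)
      (le_ciInf fun i => him i (Finset.mem_univ i))
  have hm0 : ∀ i, 0 ≤ mass i := fun i => (hm i).le
  set m : ℝ := minMass mass with hmdef
  set M : ℝ := totalMass mass with hMdef
  have hmpos : 0 < m := by rw [hmmin]; exact hm im
  have hmle : ∀ i, m ≤ mass i := fun i => by rw [hmmin]; exact him i (Finset.mem_univ i)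
  have hMge : ∀ B : Finset (Fin N), (∑ i ∈ B, mass i) ≤ M := fun B => by
    rw [hMdef, totalMass]
    exact Finset.sum_le_sum_of_subset_of_nonneg (Finset.subset_univ B) fun i _ _ => hm0 i
  have hMpos : 0 < M := by
    rw [hMdef, totalMass]
    exact Finset.sum_pos (fun i _ => hm i) Finset.univ_nonempty
  have hMeq : (∑ i, mass i) = M := rfl
  have h2m : 2 * m ≤ M := by
    have h1 : ∑ _i : Fin N, m ≤ ∑ i : Fin N, mass i := Finset.sum_le_sum fun i _ => hmle i
    rw [Finset.sum_const, Finset.card_univ, Fintype.card_fin, nsmul_eq_mul, hMeq] at h1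
    have h2 : (2:ℝ) ≤ (N:ℝ) := by exact_mod_cast hN
    nlinarith
  -- partition order and scalars
  set p := Z.parts.card with hpdef
  have hp2 : 2 ≤ p := hZ
  set K : ℝ := κ p with hKdef
  set K' : ℝ := κ' (p - 1) with hK'def
  set Dd : ℝ := dd p with hDddef
  obtain ⟨hpos, hAZScond⟩ := hAZS
  have hKpos : 0 < K := (hpos p).1
  have hK'pos : 0 < K' := (hpos (p-1)).2.1
  have hDdpos : 0 < Dd := (hpos p).2.2
  obtain ⟨-, hA1, hA2⟩ := hAZScond (p - 1) (by omega)
  rw [show p - 1 + 1 = p by omega] at hA1 hA2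
  set A : ℝ := (K' ^ 2 - K ^ 2) / (1 + K' ^ 2) with hAdef
  -- cone membership
  obtain ⟨hx1, hxnot⟩ := hx
  rw [cone, if_pos (by omega : 1 < Z.parts.card)] at hx1
  obtain ⟨hx0, hxK⟩ := hx1
  have hx0' : ∑ i, mass i • x i = 0 := hx0
  -- split cluster
  obtain ⟨i0, hi0C⟩ := hC
  obtain ⟨B₁, hB₁, hi0B₁⟩ := Z.exists_mem (Finset.mem_univ i0)
  obtain ⟨j0, hj0C, hj0B₁⟩ := Finset.not_subset.1 (hsplit B₁ hB₁)
  obtain ⟨B₂, hB₂, hj0B₂⟩ := Z.exists_mem (Finset.mem_univ j0)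
  have hB12 : B₁ ≠ B₂ := fun h => hj0B₁ (h ▸ hj0B₂)
  have hij : i0 ≠ j0 := fun h => hj0B₁ (h ▸ hi0B₁)
  have hdisj : Disjoint B₁ B₂ :=
    Z.disjoint (Finset.mem_coe.2 hB₁) (Finset.mem_coe.2 hB₂) hB12
  set D : Finset (Fin N) := B₁ ∪ B₂ with hDdef
  have hi0D : i0 ∈ D := Finset.mem_union_left _ hi0B₁
  have hj0D : j0 ∈ D := Finset.mem_union_right _ hj0B₂
  have hB₁ne : B₁.Nonempty := Z.nonempty_of_mem_parts hB₁
  have hB₂ne : B₂.Nonempty := Z.nonempty_of_mem_parts hB₂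
  set M₁ : ℝ := cmass mass B₁ with hM₁def
  set M₂ : ℝ := cmass mass B₂ with hM₂def
  have hM₁pos : 0 < M₁ := Finset.sum_pos (fun i _ => hm i) hB₁ne
  have hM₂pos : 0 < M₂ := Finset.sum_pos (fun i _ => hm i) hB₂ne
  have hM₁sum : ∑ i ∈ B₁, mass i = M₁ := rfl
  have hM₂sum : ∑ i ∈ B₂, mass i = M₂ := rfl
  have hSsum : cmass mass D = M₁ + M₂ := by
    rw [hM₁def, hM₂def, cmass, cmass, cmass, hDdef, Finset.sum_union hdisj]
  have hSpos : 0 < M₁ + M₂ := by linarith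
  have hSM : M₁ + M₂ ≤ M := by rw [← hSsum]; exact hMge D
  have hM₁M : M₁ ≤ M := hMge B₁
  have hM₂M : M₂ ≤ M := hMge B₂
  -- center of mass
  have hcomD : (M₁ + M₂) • com mass D x = M₁ • com mass B₁ x + M₂ • com mass B₂ x := by
    rw [← hSsum, cmass_smul_com mass hm ⟨i0, hi0D⟩ x, hDdef, Finset.sum_union hdisj,
      ← cmass_smul_com mass hm hB₁ne x, ← cmass_smul_com mass hm hB₂ne x, hM₁def, hM₂def]
  set Δ : Pt n := com mass B₁ x - com mass B₂ x with hΔdef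
  set q₁ : Pt n := com mass B₁ x - com mass D x with hq₁def
  set q₂ : Pt n := com mass B₂ x - com mass D x with hq₂def
  have hq₁S : (M₁ + M₂) • q₁ = M₂ • Δ := by
    rw [hq₁def, smul_sub, hcomD, hΔdef]
    module
  have hq₂S : (M₁ + M₂) • q₂ = -(M₁ • Δ) := by
    rw [hq₂def, smul_sub, hcomD, hΔdef]
    module
  have hq₁ : q₁ = (M₂ / (M₁ + M₂)) • Δ := by
    calc q₁ = (M₁ + M₂)⁻¹ • ((M₁ + M₂) • q₁) := (inv_smul_smul₀ hSpos.ne' _).symm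
      _ = (M₁ + M₂)⁻¹ • (M₂ • Δ) := by rw [hq₁S]
      _ = (M₂ / (M₁ + M₂)) • Δ := by rw [smul_smul, div_eq_inv_mul]
  have hq₂ : q₂ = -((M₁ / (M₁ + M₂)) • Δ) := by
    calc q₂ = (M₁ + M₂)⁻¹ • ((M₁ + M₂) • q₂) := (inv_smul_smul₀ hSpos.ne' _).symm
      _ = (M₁ + M₂)⁻¹ • (-(M₁ • Δ)) := by rw [hq₂S]
      _ = -((M₁ / (M₁ + M₂)) • Δ) := by rw [smul_neg, smul_smul, div_eq_inv_mul]
  have hQsum0 : M₁ • q₁ + M₂ • q₂ = 0 := by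
    rw [hq₁def, hq₂def]
    have : M₁ • (com mass B₁ x - com mass D x) + M₂ • (com mass B₂ x - com mass D x)
        = (M₁ • com mass B₁ x + M₂ • com mass B₂ x) - (M₁ + M₂) • com mass D x := by
      module
    rw [this, ← hcomD, sub_self]
  -- the merging field Q
  set Q : Conf N n := fun i => if i ∈ B₁ then q₁ else if i ∈ B₂ then q₂ else 0 with hQdef
  have hQB₁ : ∀ i ∈ B₁, Q i = q₁ := fun i hi => by rw [hQdef]; exact if_pos hi
  have hQB₂ : ∀ i ∈ B₂, Q i = q₂ := fun i hi => by
    rw [hQdef]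
    simp only
    rw [if_neg (Finset.disjoint_right.1 hdisj hi), if_pos hi]
  have hQ0 : ∀ i ∉ D, Q i = 0 := fun i hi => by
    rw [hDdef] at hi
    rw [hQdef]
    simp only
    rw [if_neg (fun h => hi (Finset.mem_union_left _ h)),
      if_neg (fun h => hi (Finset.mem_union_right _ h))]
  -- squared quantities
  set s : ℝ := minner mass (PcZ mass Z x) (PcZ mass Z x) with hsdef
  set P0sq : ℝ := minner mass (P0Z mass Z x) (P0Z mass Z x) with hP0sqdef
  set msqQ : ℝ := minner mass Q Q with hmsqQdef
  set msqP0C : ℝ := minner mass (P0C mass C x) (P0C mass C x) with hmsqP0Cdef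
  have hs0 : 0 ≤ s := minner_self_nonneg mass hm0 _
  have hmsqQ0 : 0 ≤ msqQ := minner_self_nonneg mass hm0 _
  have hmsqP0C0 : 0 ≤ msqP0C := minner_self_nonneg mass hm0 _
  -- G1
  have hG1 : P0sq ≤ K ^ 2 * s := sq_le_of_mnorm_le mass hm0 hKpos.le hxK
  -- msq Q value and bound  (G3)
  have hnormq₁ : ‖q₁‖ ^ 2 = (M₂ / (M₁ + M₂)) ^ 2 * ‖Δ‖ ^ 2 := by
    rw [hq₁, norm_smul, Real.norm_eq_abs, abs_of_pos (div_pos hM₂pos hSpos), mul_pow]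
  have hnormq₂ : ‖q₂‖ ^ 2 = (M₁ / (M₁ + M₂)) ^ 2 * ‖Δ‖ ^ 2 := by
    rw [hq₂, norm_neg, norm_smul, Real.norm_eq_abs, abs_of_pos (div_pos hM₁pos hSpos), mul_pow]
  have hmsqQval : msqQ = (M₁ * (M₂ / (M₁ + M₂)) ^ 2 + M₂ * (M₁ / (M₁ + M₂)) ^ 2) * ‖Δ‖ ^ 2 := by
    rw [hmsqQdef, minner_eq_sum_of_support mass Q Q D hQ0, hDdef, Finset.sum_union hdisj]
    have e1 : ∑ i ∈ B₁, mass i * ⟪Q i, Q i⟫ = ∑ i ∈ B₁, mass i * ⟪q₁, q₁⟫ :=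
      Finset.sum_congr rfl fun i hi => by rw [hQB₁ i hi]
    have e2 : ∑ i ∈ B₂, mass i * ⟪Q i, Q i⟫ = ∑ i ∈ B₂, mass i * ⟪q₂, q₂⟫ :=
      Finset.sum_congr rfl fun i hi => by rw [hQB₂ i hi]
    rw [e1, e2, ← Finset.sum_mul, ← Finset.sum_mul, hM₁sum, hM₂sum,
      real_inner_self_eq_norm_sq, real_inner_self_eq_norm_sq, hnormq₁, hnormq₂]
    ring
  have hG3 : msqQ ≤ M * ‖Δ‖ ^ 2 := by
    rw [hmsqQval]
    exact aux_msqQbound M M₁ M₂ _ hM₁pos hM₂pos hSM (sq_nonneg _)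
  -- G4 : pair lower bound for P0C
  have hP0Ci : P0C mass C x i0 = x i0 - com mass C x := if_pos hi0C
  have hP0Cj : P0C mass C x j0 = x j0 - com mass C x := if_pos hj0C
  have hG4 : m * ‖x i0 - x j0‖ ^ 2 ≤ 2 * msqP0C := by
    have hpair := pair_le_minner_self mass hm0 (P0C mass C x) hij
    rw [hP0Ci, hP0Cj, ← hmsqP0Cdef] at hpair
    refine aux_pair m (mass i0) (mass j0) _ _ _ msqP0C hmpos.le (hmle i0) (hmle j0)
      (norm_nonneg _) (norm_nonneg _) (norm_nonneg _) ?_ hpair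
    have he : x i0 - x j0 = (x i0 - com mass C x) - (x j0 - com mass C x) := by abel
    rw [he]
    exact norm_sub_le _ _
  -- components of P0Z
  have huB : ∀ (B : Finset (Fin N)), B ∈ Z.parts → ∀ i ∈ B,
      P0Z mass Z x i = x i - com mass B x := by
    intro B hB i hi
    show x i - PcZ mass Z x i = x i - com mass B x
    rw [PcZ_eval mass Z x hB hi]
  have hui : P0Z mass Z x i0 = x i0 - com mass B₁ x := huB B₁ hB₁ i0 hi0B₁
  have huj : P0Z mass Z x j0 = x j0 - com mass B₂ x := huB B₂ hB₂ j0 hj0B₂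
  -- G5 : triangle
  set r : ℝ := ‖P0Z mass Z x i0 - P0Z mass Z x j0‖ with hrdef
  have hW : ‖Δ‖ ≤ ‖x i0 - x j0‖ + r := by
    have he : Δ = (x i0 - x j0) - (P0Z mass Z x i0 - P0Z mass Z x j0) := by
      rw [hui, huj, hΔdef]
      abel
    rw [he, hrdef]
    exact norm_sub_le _ _
  have hr2 : m * r ^ 2 ≤ 2 * P0sq := by
    have hpair := pair_le_minner_self mass hm0 (P0Z mass Z x) hij
    rw [← hP0sqdef] at hpair
    exact aux_pair m (mass i0) (mass j0) _ _ _ P0sq hmpos.le (hmle i0) (hmle j0)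
      (norm_nonneg _) (norm_nonneg _) (norm_nonneg _) (norm_sub_le _ _) hpair
  -- centering identity
  have hcent : ∀ (B : Finset (Fin N)), B.Nonempty →
      ∑ i ∈ B, mass i • (x i - com mass B x) = 0 := by
    intro B hB
    have : ∑ i ∈ B, mass i • (x i - com mass B x)
        = (∑ i ∈ B, mass i • x i) - (∑ i ∈ B, mass i) • com mass B x := by
      rw [Finset.sum_smul]
      rw [← Finset.sum_sub_distrib]
      exact Finset.sum_congr rfl fun i _ => smul_sub _ _ _
    rw [this, show (∑ i ∈ B, mass i) = cmass mass B from rfl,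
      cmass_smul_com mass hm hB x, sub_self]
  -- G2 : main dichotomy
  have hG2 : A * s ≤ msqQ := by
    rcases Nat.lt_or_ge p 3 with hp3 | hp3
    · -- p = 2 : D = univ and Q = PcZ Z x
      have hp2e : Z.parts.card = 2 := by omega
      have hsub : ({B₁, B₂} : Finset (Finset (Fin N))) ⊆ Z.parts := by
        intro B hB
        rcases Finset.mem_insert.1 hB with rfl | hB
        · exact hB₁
        · rw [Finset.mem_singleton.1 hB]; exact hB₂
      have hpartseq : Z.parts = {B₁, B₂} :=
        (Finset.eq_of_subset_of_card_le hsub (by rw [hp2e, Finset.card_pair hB12])).symm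
      have hDuniv : D = Finset.univ := by
        have h0 := Z.sup_parts
        rw [hpartseq] at h0
        rw [hDdef, ← h0]
        simp [Finset.sup_insert, Finset.sup_eq_union]
      have hcomD0 : com mass D x = 0 := by
        rw [com, hDuniv, hx0', smul_zero]
      have hQeq : Q = PcZ mass Z x := by
        funext i
        have hiD : i ∈ D := hDuniv ▸ Finset.mem_univ i
        rcases Finset.mem_union.1 (hDdef ▸ hiD) with h | h
        · rw [hQB₁ i h, PcZ_eval mass Z x hB₁ h, hq₁def, hcomD0, sub_zero]
        · rw [hQB₂ i h, PcZ_eval mass Z x hB₂ h, hq₂def, hcomD0, sub_zero]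
      have hmsqQs : msqQ = s := by rw [hmsqQdef, hQeq, hsdef]
      rw [hmsqQs, hAdef]
      exact aux_trivcone K K' s hKpos hs0
    · -- p ≥ 3 : construct the merged partition Z'
      set E : Finset (Finset (Fin N)) := (Z.parts.erase B₁).erase B₂ with hEdef
      have hB₂E : B₂ ∈ Z.parts.erase B₁ := Finset.mem_erase.2 ⟨hB12.symm, hB₂⟩
      have hEmem : ∀ {B}, B ∈ E → B ∈ Z.parts ∧ B ≠ B₁ ∧ B ≠ B₂ := by
        intro B hB
        have h2 := Finset.mem_erase.1 hB
        have h1 := Finset.mem_erase.1 h2.2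
        exact ⟨h1.2, h1.1, h2.1⟩
      have hpartsE : Z.parts = insert B₁ (insert B₂ E) := by
        rw [hEdef, Finset.insert_erase hB₂E, Finset.insert_erase hB₁]
      have hDE : D ∉ E := by
        intro hDE'
        have hDparts := (hEmem hDE').1
        have hDB₁ : D = B₁ := Z.eq_of_mem_parts hDparts hB₁ hi0D hi0B₁
        exact hj0B₁ (hDB₁ ▸ hj0D)
      have hDne : D ≠ ⊥ := by
        rw [Finset.bot_eq_empty, ← Finset.nonempty_iff_ne_empty]
        exact ⟨i0, hi0D⟩
      have hsupind : (insert D E).SupIndep id := by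
        rw [Finset.supIndep_iff_pairwiseDisjoint]
        intro a ha b hb hab
        simp only [Finset.coe_insert, Set.mem_insert_iff, Finset.mem_coe] at ha hb
        have hdisjE : ∀ {B}, B ∈ E → Disjoint D B := by
          intro B hB
          obtain ⟨hBp, hB1, hB2⟩ := hEmem hB
          rw [hDdef, Finset.disjoint_union_left]
          exact ⟨Z.disjoint (Finset.mem_coe.2 hB₁) (Finset.mem_coe.2 hBp) (Ne.symm hB1),
            Z.disjoint (Finset.mem_coe.2 hB₂) (Finset.mem_coe.2 hBp) (Ne.symm hB2)⟩
        rcases ha with rfl | ha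
        · rcases hb with rfl | hb
          · exact absurd rfl hab
          · exact hdisjE hb
        · rcases hb with rfl | hb
          · exact (hdisjE ha).symm
          · exact Z.disjoint (Finset.mem_coe.2 (hEmem ha).1) (Finset.mem_coe.2 (hEmem hb).1) hab
      have hsup : (insert D E).sup id = Finset.univ := by
        have h1 : (insert D E).sup id = (insert B₁ (insert B₂ E)).sup id := by
          rw [Finset.sup_insert, Finset.sup_insert, Finset.sup_insert, hDdef]
          simp only [id_eq]
          rw [← Finset.sup_eq_union, sup_assoc]
        rw [h1, ← hpartsE, Z.sup_parts]
      have hbotE : (⊥ : Finset (Fin N)) ∉ insert D E := by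
        intro hbot
        rcases Finset.mem_insert.1 hbot with h | h
        · exact hDne h.symm
        · exact Z.bot_notMem (hEmem h).1
      set Z' : Partn N := ⟨insert D E, hsupind, hsup, hbotE⟩ with hZ'def
      have hDZ' : D ∈ Z'.parts := Finset.mem_insert_self D E
      have hEZ' : ∀ {B}, B ∈ E → B ∈ Z'.parts := fun hB => Finset.mem_insert_of_mem hB
      have hEcard : E.card = p - 2 := by
        rw [hEdef, Finset.card_erase_of_mem hB₂E, Finset.card_erase_of_mem hB₁, ← hpdef]
        omega
      have hZ'card : Z'.parts.card = p - 1 := by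
        show (insert D E).card = p - 1
        rw [Finset.card_insert_of_notMem hDE, hEcard]
        omega
      -- x fails the cone for Z'
      have hnotmem : x ∉ cone mass Z' (κ' Z'.parts.card) := by
        intro hmem
        exact hxnot (Set.mem_iUnion.2 ⟨Z', Set.mem_iUnion.2 ⟨by omega, hmem⟩⟩)
      rw [cone, if_pos (by omega : 1 < Z'.parts.card), hZ'card] at hnotmem
      have hlt : K' * mnorm mass (PcZ mass Z' x) < mnorm mass (P0Z mass Z' x) := by
        by_contra hle
        exact hnotmem ⟨hx0, not_lt.1 hle⟩
      -- decomposition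
      have hPc' : ∀ i, PcZ mass Z' x i = PcZ mass Z x i - Q i := by
        intro i
        by_cases h1 : i ∈ B₁
        · rw [PcZ_eval mass Z' x hDZ' (Finset.mem_union_left _ h1),
            PcZ_eval mass Z x hB₁ h1, hQB₁ i h1, hq₁def]
          abel
        · by_cases h2 : i ∈ B₂
          · rw [PcZ_eval mass Z' x hDZ' (Finset.mem_union_right _ h2),
              PcZ_eval mass Z x hB₂ h2, hQB₂ i h2, hq₂def]
            abel
          · obtain ⟨B₃, hB₃, hiB₃⟩ := Z.exists_mem (Finset.mem_univ i)
            have h31 : B₃ ≠ B₁ := fun h => h1 (h ▸ hiB₃)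
            have h32 : B₃ ≠ B₂ := fun h => h2 (h ▸ hiB₃)
            have hB₃E : B₃ ∈ E := by
              rw [hEdef]
              exact Finset.mem_erase.2 ⟨h32, Finset.mem_erase.2 ⟨h31, hB₃⟩⟩
            rw [PcZ_eval mass Z' x (hEZ' hB₃E) hiB₃, PcZ_eval mass Z x hB₃ hiB₃,
              hQ0 i (fun h => (Finset.mem_union.1 h).elim h1 h2), sub_zero]
      have hPceq : PcZ mass Z x = Q + PcZ mass Z' x := by
        funext i
        rw [Pi.add_apply, hPc' i]
        abel
      have hP0eq : P0Z mass Z' x = P0Z mass Z x + Q := by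
        funext i
        show x i - PcZ mass Z' x i = P0Z mass Z x i + Q i
        rw [hPc' i]
        show x i - (PcZ mass Z x i - Q i) = (x i - PcZ mass Z x i) + Q i
        abel
      -- orthogonality
      have hPc'D : ∀ i ∈ D, PcZ mass Z' x i = com mass D x :=
        fun i hi => PcZ_eval mass Z' x hDZ' hi
      have hperp1 : minner mass Q (PcZ mass Z' x) = 0 := by
        rw [minner_eq_sum_of_support mass Q _ D hQ0, hDdef, Finset.sum_union hdisj]
        have e1 : ∑ i ∈ B₁, mass i * ⟪Q i, PcZ mass Z' x i⟫
            = ∑ i ∈ B₁, mass i * ⟪q₁, com mass D x⟫ :=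
          Finset.sum_congr rfl fun i hi => by
            rw [hQB₁ i hi, hPc'D i (Finset.mem_union_left _ hi)]
        have e2 : ∑ i ∈ B₂, mass i * ⟪Q i, PcZ mass Z' x i⟫
            = ∑ i ∈ B₂, mass i * ⟪q₂, com mass D x⟫ :=
          Finset.sum_congr rfl fun i hi => by
            rw [hQB₂ i hi, hPc'D i (Finset.mem_union_right _ hi)]
        rw [e1, e2, ← Finset.sum_mul, ← Finset.sum_mul, hM₁sum, hM₂sum]
        rw [show M₁ * ⟪q₁, com mass D x⟫ + M₂ * ⟪q₂, com mass D x⟫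
            = ⟪M₁ • q₁ + M₂ • q₂, com mass D x⟫ by
          rw [inner_add_left, real_inner_smul_left, real_inner_smul_left]]
        rw [hQsum0, inner_zero_left]
      have hperp2 : minner mass Q (P0Z mass Z x) = 0 := by
        rw [minner_eq_sum_of_support mass Q _ D hQ0, hDdef, Finset.sum_union hdisj]
        have e1 : ∑ i ∈ B₁, mass i * ⟪Q i, P0Z mass Z x i⟫
            = ∑ i ∈ B₁, mass i * ⟪q₁, x i - com mass B₁ x⟫ :=
          Finset.sum_congr rfl fun i hi => by rw [hQB₁ i hi, huB B₁ hB₁ i hi]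
        have e2 : ∑ i ∈ B₂, mass i * ⟪Q i, P0Z mass Z x i⟫
            = ∑ i ∈ B₂, mass i * ⟪q₂, x i - com mass B₂ x⟫ :=
          Finset.sum_congr rfl fun i hi => by rw [hQB₂ i hi, huB B₂ hB₂ i hi]
        have e3 : ∑ i ∈ B₁, mass i * ⟪q₁, x i - com mass B₁ x⟫
            = ⟪q₁, ∑ i ∈ B₁, mass i • (x i - com mass B₁ x)⟫ :=
          sum_mass_inner_right mass B₁ _ q₁
        have e4 : ∑ i ∈ B₂, mass i * ⟪q₂, x i - com mass B₂ x⟫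
            = ⟪q₂, ∑ i ∈ B₂, mass i • (x i - com mass B₂ x)⟫ :=
          sum_mass_inner_right mass B₂ _ q₂
        rw [e1, e2, e3, e4, hcent B₁ hB₁ne, hcent B₂ hB₂ne,
          inner_zero_right, inner_zero_right, add_zero]
      -- Pythagoras
      have hs_eq : s = msqQ + minner mass (PcZ mass Z' x) (PcZ mass Z' x) := by
        rw [hsdef, hPceq, minner_add_add, hperp1, ← hmsqQdef]
        ring
      have hP0'_eq : minner mass (P0Z mass Z' x) (P0Z mass Z' x) = P0sq + msqQ := by
        rw [hP0eq, minner_add_add, ← hP0sqdef, ← hmsqQdef,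
          minner_comm' mass (P0Z mass Z x) Q, hperp2]
        ring
      -- strict cone inequality squared
      have hstrict : K' ^ 2 * minner mass (PcZ mass Z' x) (PcZ mass Z' x)
          < minner mass (P0Z mass Z' x) (P0Z mass Z' x) :=
        sq_lt_of_mnorm_lt mass hm0 hK'pos.le hlt
      rw [hP0'_eq] at hstrict
      have hPc'val : minner mass (PcZ mass Z' x) (PcZ mass Z' x) = s - msqQ := by
        rw [hs_eq]; ring
      rw [hPc'val] at hstrict
      rw [hAdef]
      exact aux_cone K K' s msqQ P0sq hK'pos hG1 hstrict
  -- final arithmetic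
  have hkey : Dd ^ 2 * s ≤ msqP0C :=
    aux_final m M K K' Dd A s msqQ msqP0C ‖Δ‖ r ‖x i0 - x j0‖ P0sq
      hmpos hMpos h2m hKpos hDdpos hA1 hA2 hs0 (norm_nonneg _) (norm_nonneg _)
      (norm_nonneg _) hG1 hG2 hG3 hr2 hW hG4
  -- conclude via square roots
  have hgoal : Dd * mnorm mass (PcZ mass Z x) ≤ mnorm mass (P0C mass C x) := by
    rw [mnorm_eq_sqrt, mnorm_eq_sqrt, ← hsdef, ← hmsqP0Cdef]
    calc Dd * Real.sqrt s = Real.sqrt (Dd ^ 2 * s) := by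
          rw [Real.sqrt_mul (sq_nonneg Dd), Real.sqrt_sq hDdpos.le]
      _ ≤ Real.sqrt msqP0C := Real.sqrt_le_sqrt hkey
  exact hgoal
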